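/- Let K be an H-operator-valued kernel on X which is Γ-invariant and partially positive semidefinite with respect to the partition {X_s}_{s∈S}. The following are equivalent: (1) K is of bounded shift type; (2) there exists a unique family of bounded linear operators Φ(α) : ℛ_{K^{d(α)}} → ℛ_{K^{c(α)}} (α ∈ Γ) such that Φ(αβ) = Φ(α)Φ(β) for composable pairs, Φ(α*) = Φ(α)* for all α ∈ Γ, and Φ(α)K^{d(α)}_x h = K^{c(α)}_{α·x} h for all α ∈ Γ, x ∈ X_{d(α)}, h ∈ H_x; (3) there exists a minimal Γ-invariant Hilbert space linearisation (𝒦, V, Ψ) of K, and it is unique modulo unitary equivalence: for any other minimal Γ-invariant Hilbert space linearisation (𝒦′, V′, Ψ′) of K there exist unitary operators U_s : 𝒦_s → 𝒦′_s (s ∈ S) with U_{c(α)}Ψ(α) = Ψ′(α)U_{d(α)} for all α ∈ Γ and U_{a(x)}V_x = V′_x for all x ∈ X. -/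

import Mathlib

open scoped InnerProductSpace

noncomputable section

universe u uΓ uS v vO w

/-- A `*`-semigroupoid: partially defined multiplication (the product `mul α β`
is subject to the axioms only when `d α = c β`) together with an involution. -/
structure StarSgd (Γ : Type uΓ) (S : Type uS) where
  d : Γ → S
  c : Γ → S
  mul : Γ → Γ → Γ
  star : Γ → Γ
  d_mul : ∀ {α β : Γ}, d α = c β → d (mul α β) = d β
  c_mul : ∀ {α β : Γ}, d α = c β → c (mul α β) = c α
  mul_assoc : ∀ {α β γ : Γ}, d α = c β → d β = c γ →
    mul α (mul β γ) = mul (mul α β) γ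
  d_star : ∀ α, d (star α) = c α
  c_star : ∀ α, c (star α) = d α
  star_star : ∀ α, star (star α) = α
  star_mul : ∀ {α β : Γ}, d α = c β → star (mul α β) = mul (star β) (star α)

/-- A left action of a semigroupoid on a set `X`, with surjective anchor `a`;
`act α x` is subject to the axioms only when `d α = a x`. -/
structure SgdAction (Γ : Type uΓ) (S : Type uS) (X : Type v) (G : StarSgd Γ S) where
  a : X → S
  a_surj : Function.Surjective a
  act : Γ → X → X
  a_act : ∀ {α : Γ} {x : X}, G.d α = a x → a (act α x) = G.c α
  act_mul : ∀ {α β : Γ} {x : X}, G.d β = a x → G.d α = G.c β →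
    act (G.mul α β) x = act α (act β x)

variable {𝕜 : Type u} [RCLike 𝕜] {Γ : Type uΓ} {S : Type uS} {X : Type v}
  {O : Type vO} {E : O → Type w}
  [∀ o, NormedAddCommGroup (E o)] [∀ o, InnerProductSpace 𝕜 (E o)]
  [∀ o, CompleteSpace (E o)]

/-- Transport along an equality of indices: since the Hilbert bundle over `X`
is given as a pullback `x ↦ E (p x)`, equal indices give literally the same
Hilbert space, and the transport is a linear isometry. -/
def castE (𝕜 : Type u) [RCLike 𝕜] {O : Type vO} (E : O → Type w)
    [∀ o, NormedAddCommGroup (E o)] [∀ o, InnerProductSpace 𝕜 (E o)]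
    {o o' : O} (h : o = o') : E o ≃ₗᵢ[𝕜] E o' := by
  subst h; exact LinearIsometryEquiv.refl 𝕜 (E o)

variable {G : StarSgd Γ S} (A : SgdAction Γ S X G) (p : X → O)

/-- `K` is partially Hermitian with respect to the partition of `X` into the
fibres of the anchor map. -/
def PartHermitian (K : ∀ y x : X, E (p x) →L[𝕜] E (p y)) : Prop :=
  ∀ x y : X, A.a x = A.a y → ContinuousLinearMap.adjoint (K x y) = K y x

/-- `K` is partially positive semidefinite with respect to the partition of
`X` into the fibres of the anchor map. -/
def PartPSD (K : ∀ y x : X, E (p x) →L[𝕜] E (p y)) : Prop :=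
  PartHermitian A p K ∧
  ∀ (s : S) (n : ℕ) (x : Fin n → X), (∀ i, A.a (x i) = s) →
    ∀ h : ∀ i, E (p (x i)),
      0 ≤ RCLike.re (∑ i, ∑ j, ⟪K (x j) (x i) (h i), h j⟫_𝕜)

variable (hp : ∀ {α : Γ} {x : X}, G.d α = A.a x → p (A.act α x) = p x)

/-- `K` is `Γ`-invariant: `K(α·x, y) = K(x, α*·y)`, expressed using the
transport isometries coming from the constancy of the bundle on orbits. -/
def GammaInvariant (K : ∀ y x : X, E (p x) →L[𝕜] E (p y)) : Prop :=
  ∀ (α : Γ) (x y : X) (hx : G.d α = A.a x) (hy : G.c α = A.a y) (k : E (p y)),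
    castE 𝕜 E (hp hx) (K (A.act α x) y k) =
      K x (A.act (G.star α) y)
        ((castE 𝕜 E (hp ((G.d_star α).trans hy))).symm k)

/-- `K` is of bounded shift type: for every `α` there is `M_α ≥ 0` dominating
the shifted quadratic forms by the original ones (stated via finite families of
points in the fibre `X_{d(α)}`). -/
def BoundedShiftType (K : ∀ y x : X, E (p x) →L[𝕜] E (p y)) : Prop :=
  ∀ α : Γ, ∃ M : ℝ, 0 ≤ M ∧
    ∀ (n : ℕ) (z : Fin n → X) (hz : ∀ i, G.d α = A.a (z i))
      (g : ∀ i, E (p (z i))),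
      RCLike.re (∑ i, ∑ j, ⟪K (A.act α (z j)) (A.act α (z i))
          ((castE 𝕜 E (hp (hz i))).symm (g i)),
          (castE 𝕜 E (hp (hz j))).symm (g j)⟫_𝕜) ≤
        M * RCLike.re (∑ i, ∑ j, ⟪K (z j) (z i) (g i), g j⟫_𝕜)

universe w'

/-- A bundled Hilbert space over `𝕜`. -/
structure HSp (𝕜 : Type u) [RCLike 𝕜] : Type (max u (w' + 1)) where
  carrier : Type w'
  [ng : NormedAddCommGroup carrier]
  [ip : InnerProductSpace 𝕜 carrier]
  [cs : CompleteSpace carrier]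

attribute [instance] HSp.ng HSp.ip HSp.cs

/-- Transport between the members of a bundle of Hilbert spaces along an
equality of indices. -/
def castH (𝕜 : Type u) [RCLike 𝕜] {S : Type uS} (𝒦 : S → HSp.{u, w'} 𝕜)
    {s t : S} (h : s = t) : (𝒦 s).carrier ≃ₗᵢ[𝕜] (𝒦 t).carrier := by
  subst h; exact LinearIsometryEquiv.refl 𝕜 (𝒦 s).carrier

/-- A reproducing kernel Hilbert space of sections over the fibre `X_s`. -/
structure RKHSOn (𝕜 : Type u) [RCLike 𝕜] {Γ : Type uΓ} {S : Type uS}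
    {X : Type v} {O : Type vO} (E : O → Type w)
    [∀ o, NormedAddCommGroup (E o)] [∀ o, InnerProductSpace 𝕜 (E o)]
    [∀ o, CompleteSpace (E o)]
    {G : StarSgd Γ S} (A : SgdAction Γ S X G) (p : X → O)
    (K : ∀ y x : X, E (p x) →L[𝕜] E (p y)) (s : S) :
    Type (max u v w (w' + 1)) where
  carrier : Type w'
  [ng : NormedAddCommGroup carrier]
  [ip : InnerProductSpace 𝕜 carrier]
  [cs : CompleteSpace carrier]
  emb : carrier →ₗ[𝕜] ∀ x : {x : X // A.a x = s}, E (p x.val)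
  emb_inj : Function.Injective emb
  Kx : ∀ x : {x : X // A.a x = s}, E (p x.val) → carrier
  emb_Kx : ∀ (x : {x : X // A.a x = s}) (h : E (p x.val))
    (y : {x : X // A.a x = s}), emb (Kx x h) y = K y.val x.val h
  repro : ∀ (f : carrier) (x : {x : X // A.a x = s}) (h : E (p x.val)),
    ⟪emb f x, h⟫_𝕜 = ⟪f, Kx x h⟫_𝕜

attribute [instance] RKHSOn.ng RKHSOn.ip RKHSOn.cs

/-- Transport between the members of a bundle of reproducing kernel Hilbert
spaces along an equality of indices. -/
def castR {K : ∀ y x : X, E (p x) →L[𝕜] E (p y)}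
    (R : ∀ s : S, RKHSOn.{u, uΓ, uS, v, vO, w, w'} 𝕜 E A p K s)
    {s t : S} (h : s = t) : (R s).carrier ≃ₗᵢ[𝕜] (R t).carrier := by
  subst h; exact LinearIsometryEquiv.refl 𝕜 (R s).carrier

/-- A `Γ`-invariant Hilbert space linearisation of `K` (with a bounded
`*`-representation `Ψ`). -/
structure InvLin (𝕜 : Type u) [RCLike 𝕜] {Γ : Type uΓ} {S : Type uS}
    {X : Type v} {O : Type vO} (E : O → Type w)
    [∀ o, NormedAddCommGroup (E o)] [∀ o, InnerProductSpace 𝕜 (E o)]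
    [∀ o, CompleteSpace (E o)]
    {G : StarSgd Γ S} (A : SgdAction Γ S X G) (p : X → O)
    (hp : ∀ {α : Γ} {x : X}, G.d α = A.a x → p (A.act α x) = p x)
    (K : ∀ y x : X, E (p x) →L[𝕜] E (p y)) :
    Type (max u uΓ uS v w (w' + 1)) where
  Ksp : S → HSp.{u, w'} 𝕜
  V : ∀ x : X, E (p x) →L[𝕜] (Ksp (A.a x)).carrier
  lin : ∀ (x y : X) (hxy : A.a y = A.a x) (k : E (p y)) (h : E (p x)),
    ⟪(K x y) k, h⟫_𝕜 = ⟪castH 𝕜 Ksp hxy (V y k), V x h⟫_𝕜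
  Ψ : ∀ α : Γ, (Ksp (G.d α)).carrier →L[𝕜] (Ksp (G.c α)).carrier
  Ψ_mul : ∀ (α β : Γ) (hc : G.d α = G.c β) (f : (Ksp (G.d β)).carrier),
    Ψ (G.mul α β) (castH 𝕜 Ksp (G.d_mul hc).symm f) =
      castH 𝕜 Ksp (G.c_mul hc).symm (Ψ α (castH 𝕜 Ksp hc.symm (Ψ β f)))
  Ψ_star : ∀ (α : Γ) (g : (Ksp (G.c α)).carrier),
    castH 𝕜 Ksp (G.c_star α) (Ψ (G.star α) (castH 𝕜 Ksp (G.d_star α).symm g)) =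
      ContinuousLinearMap.adjoint (Ψ α) g
  Ψ_shift : ∀ (α : Γ) (x : X) (hx : G.d α = A.a x) (h : E (p x)),
    Ψ α (castH 𝕜 Ksp hx.symm (V x h)) =
      castH 𝕜 Ksp (A.a_act hx) (V (A.act α x) ((castE 𝕜 E (hp hx)).symm h))

/-- Minimality of a `Γ`-invariant linearisation. -/
def InvLin.Minimal {𝕜 : Type u} [RCLike 𝕜] {Γ : Type uΓ} {S : Type uS}
    {X : Type v} {O : Type vO} {E : O → Type w}
    [∀ o, NormedAddCommGroup (E o)] [∀ o, InnerProductSpace 𝕜 (E o)]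
    [∀ o, CompleteSpace (E o)]
    {G : StarSgd Γ S} {A : SgdAction Γ S X G} {p : X → O}
    {hp : ∀ {α : Γ} {x : X}, G.d α = A.a x → p (A.act α x) = p x}
    {K : ∀ y x : X, E (p x) →L[𝕜] E (p y)}
    (L : InvLin.{u, uΓ, uS, v, vO, w, w'} 𝕜 E A p hp K) : Prop :=
  ∀ s : S, Dense (↑(Submodule.span 𝕜 (⋃ x : {x : X // A.a x = s},
    Set.range fun h : E (p x.val) => castH 𝕜 L.Ksp x.2 (L.V x.val h))) :
      Set (L.Ksp s).carrier)
set_option linter.unusedSectionVars false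
section CastLemmas

example {o : O} : castE 𝕜 E (rfl : o = o) = LinearIsometryEquiv.refl 𝕜 (E o) := rfl

lemma castE_trans {o o' o'' : O} (h : o = o') (h' : o' = o'') (x : E o) :
    castE 𝕜 E h' (castE 𝕜 E h x) = castE 𝕜 E (h.trans h') x := by
  subst h h'; rfl

lemma castE_symm_symm {o o' o'' : O} (h : o' = o) (h' : o'' = o') (x : E o) :
    (castE 𝕜 E h').symm ((castE 𝕜 E h).symm x) = (castE 𝕜 E (h'.trans h)).symm x := by
  subst h h'; rfl

lemma inner_castE {o o' : O} (h : o = o') (x y : E o) :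
    ⟪castE 𝕜 E h x, castE 𝕜 E h y⟫_𝕜 = ⟪x, y⟫_𝕜 := by
  subst h; rfl

end CastLemmas

section GenericHilbert

variable {EE : Type*} [NormedAddCommGroup EE] [InnerProductSpace 𝕜 EE] [CompleteSpace EE]
  {FF : Type*} [NormedAddCommGroup FF] [NormedSpace 𝕜 FF] {ι : Type*}

lemma denseSpan_ext {v : ι → EE}
    (hd : Dense (Submodule.span 𝕜 (Set.range v) : Set EE))
    {Φ Ψ : EE →L[𝕜] FF} (h : ∀ i, Φ (v i) = Ψ (v i)) : Φ = Ψ := by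
  ext u
  have hsub : (Submodule.span 𝕜 (Set.range v) : Set EE) ⊆ {x | Φ x = Ψ x} := by
    intro x hx
    induction hx using Submodule.span_induction with
    | mem x hx => obtain ⟨i, rfl⟩ := hx; exact h i
    | zero => simp
    | add a b _ _ ha hb => simp only [Set.mem_setOf_eq] at *; simp [map_add, ha, hb]
    | smul c a _ ha => simp only [Set.mem_setOf_eq] at *; simp [map_smul, ha]
  have hu : u ∈ closure {x | Φ x = Ψ x} := (closure_mono hsub) (hd u)
  exact (isClosed_eq Φ.continuous Ψ.continuous).closure_subset hu
lemma exists_bounded_extension [CompleteSpace FF] (v : ι → EE) (w : ι → FF)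
    (hd : Dense (Submodule.span 𝕜 (Set.range v) : Set EE)) (C : ℝ) (hC : 0 ≤ C)
    (hb : ∀ f : ι →₀ 𝕜, ‖Finsupp.linearCombination 𝕜 w f‖ ≤
      C * ‖Finsupp.linearCombination 𝕜 v f‖) :
    ∃ Φ : EE →L[𝕜] FF, (∀ i, Φ (v i) = w i) ∧ ∀ u, ‖Φ u‖ ≤ C * ‖u‖ := by
  set T := Finsupp.linearCombination 𝕜 v with hT
  set Tw := Finsupp.linearCombination 𝕜 w with hTw
  set D : Submodule 𝕜 EE := Submodule.span 𝕜 (Set.range v) with hD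
  have key : ∀ f g : ι →₀ 𝕜, T f = T g → Tw f = Tw g := by
    intro f g hfg
    have h0 : ‖Tw (f - g)‖ ≤ C * ‖T (f - g)‖ := hb _
    rw [map_sub, map_sub, hfg, sub_self, norm_zero, mul_zero] at h0
    exact sub_eq_zero.mp (norm_le_zero_iff.mp h0)
  have hrange : ∀ d : D, ∃ f, T f = (d : EE) := by
    intro d
    have : (d : EE) ∈ LinearMap.range T := by
      rw [hT, Finsupp.range_linearCombination]; exact d.2
    exact this
  choose sec hsec using hrange
  let g0 : D →ₗ[𝕜] FF :=
  { toFun := fun d => Tw (sec d)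
    map_add' := fun d e => by
      have h1 : T (sec (d + e)) = T (sec d + sec e) := by
        rw [map_add, hsec, hsec, hsec]; rfl
      show Tw (sec (d+e)) = Tw (sec d) + Tw (sec e)
      rw [key _ _ h1, map_add]
    map_smul' := fun c d => by
      have h1 : T (sec (c • d)) = T (c • sec d) := by
        rw [map_smul, hsec, hsec]; rfl
      show Tw (sec (c • d)) = c • Tw (sec d)
      rw [key _ _ h1, map_smul] }
  have hg0 : ∀ d : D, ‖g0 d‖ ≤ C * ‖d‖ := by
    intro d
    have := hb (sec d)
    rw [hsec d] at this
    exact this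
  let g0c : D →L[𝕜] FF := g0.mkContinuous C hg0
  have hdr : DenseRange (D.subtypeL) := by
    have h1 : Set.range (D.subtypeL) = (D : Set EE) := Subtype.range_coe
    rw [DenseRange, h1]; exact hd
  have hui : IsUniformInducing (⇑(D.subtypeL)) :=
    isometry_subtype_coe.isUniformInducing
  refine ⟨g0c.extend D.subtypeL, ?_, ?_⟩
  · intro i
    have hv : v i ∈ D := Submodule.subset_span ⟨i, rfl⟩
    have h1 : (D.subtypeL) (⟨v i, hv⟩ : D) = v i := rfl
    rw [← h1, ContinuousLinearMap.extend_eq g0c hdr hui]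
    have h2 : T (sec ⟨v i, hv⟩) = T (Finsupp.single i 1) := by
      rw [hsec]
      simp [hT, Finsupp.linearCombination_single]
    have h3 : g0c (⟨v i, hv⟩ : D) = Tw (sec ⟨v i, hv⟩) := rfl
    rw [h3, key _ _ h2, hTw]
    simp [Finsupp.linearCombination_single]
  · intro u
    refine hdr.induction_on u ?_ ?_
    · exact isClosed_le (continuous_norm.comp (g0c.extend D.subtypeL).continuous)
        (continuous_const.mul continuous_norm)
    · intro d
      rw [ContinuousLinearMap.extend_eq g0c hdr hui]
      exact hg0 d

lemma lc_norm_eq {GG : Type*} [NormedAddCommGroup GG] [InnerProductSpace 𝕜 GG]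
    {v : ι → EE} {w : ι → GG}
    (h : ∀ i j, ⟪v i, v j⟫_𝕜 = ⟪w i, w j⟫_𝕜) (f : ι →₀ 𝕜) :
    ‖Finsupp.linearCombination 𝕜 v f‖ = ‖Finsupp.linearCombination 𝕜 w f‖ := by
  have key : ⟪Finsupp.linearCombination 𝕜 v f, Finsupp.linearCombination 𝕜 v f⟫_𝕜 =
      ⟪Finsupp.linearCombination 𝕜 w f, Finsupp.linearCombination 𝕜 w f⟫_𝕜 := by
    rw [Finsupp.linearCombination_apply, Finsupp.linearCombination_apply,
      Finsupp.sum, Finsupp.sum, sum_inner, sum_inner]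
    refine Finset.sum_congr rfl fun i _ => ?_
    rw [inner_sum, inner_sum]
    refine Finset.sum_congr rfl fun j _ => ?_
    rw [inner_smul_left, inner_smul_left, inner_smul_right, inner_smul_right, h]
  rw [@norm_eq_sqrt_re_inner 𝕜, @norm_eq_sqrt_re_inner 𝕜, key]

lemma exists_unitary {GG : Type*} [NormedAddCommGroup GG] [InnerProductSpace 𝕜 GG]
    [CompleteSpace GG] (v : ι → EE) (w : ι → GG)
    (hdv : Dense (Submodule.span 𝕜 (Set.range v) : Set EE))
    (hdw : Dense (Submodule.span 𝕜 (Set.range w) : Set GG))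
    (h : ∀ i j, ⟪v i, v j⟫_𝕜 = ⟪w i, w j⟫_𝕜) :
    ∃ U : EE ≃ₗᵢ[𝕜] GG, ∀ i, U (v i) = w i := by
  obtain ⟨Φ, hΦ, hΦn⟩ := exists_bounded_extension v w hdv 1 zero_le_one
    (fun f => by rw [lc_norm_eq h f, one_mul])
  obtain ⟨Ψ, hΨ, hΨn⟩ := exists_bounded_extension w v hdw 1 zero_le_one
    (fun f => by rw [← lc_norm_eq h f, one_mul])
  have hΨΦ : ∀ u, Ψ (Φ u) = u := by
    have h1 : Ψ.comp Φ = ContinuousLinearMap.id 𝕜 EE :=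
      denseSpan_ext hdv (fun i => by simp [hΦ, hΨ])
    intro u; exact DFunLike.congr_fun h1 u
  have hΦΨ : ∀ u, Φ (Ψ u) = u := by
    have h1 : Φ.comp Ψ = ContinuousLinearMap.id 𝕜 GG :=
      denseSpan_ext hdw (fun i => by simp [hΦ, hΨ])
    intro u; exact DFunLike.congr_fun h1 u
  have hnorm : ∀ u, ‖Φ u‖ = ‖u‖ := by
    intro u
    refine le_antisymm (by simpa using hΦn u) ?_
    calc ‖u‖ = ‖Ψ (Φ u)‖ := by rw [hΨΦ]
    _ ≤ 1 * ‖Φ u‖ := hΨn _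
    _ = ‖Φ u‖ := one_mul _
  refine ⟨⟨LinearEquiv.ofLinear (Φ : EE →ₗ[𝕜] GG) (Ψ : GG →ₗ[𝕜] EE) ?_ ?_, hnorm⟩, hΦ⟩
  · ext u; exact hΦΨ u
  · ext u; exact hΨΦ u

end GenericHilbert
section KernelSec
set_option linter.unusedSectionVars false
set_option maxHeartbeats 1000000

variable {A} {p}

universe wH

lemma castE_symm_eq {o o' : O} (h : o = o') :
    (castE 𝕜 E h).symm = castE 𝕜 E h.symm := by subst h; rfl

lemma castE_trans' {o o' o'' : O} (h : o = o') (h' : o' = o'') (x : E o) :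
    castE 𝕜 E h' (castE 𝕜 E h x) = castE 𝕜 E (h.trans h') x := by
  subst h h'; rfl

lemma castH_rfl (𝒦 : S → HSp.{u, wH} 𝕜) (s : S) :
    castH 𝕜 𝒦 (rfl : s = s) = LinearIsometryEquiv.refl 𝕜 (𝒦 s).carrier := rfl

lemma castH_inner_castH (𝒦 : S → HSp.{u, wH} 𝕜) {s t r : S} (h1 : s = r) (h2 : t = r)
    (a : (𝒦 s).carrier) (b : (𝒦 t).carrier) :
    ⟪castH 𝕜 𝒦 h1 a, castH 𝕜 𝒦 h2 b⟫_𝕜 = ⟪castH 𝕜 𝒦 (h1.trans h2.symm) a, b⟫_𝕜 := by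
  subst h2; rfl

variable {K : ∀ y x : X, E (p x) →L[𝕜] E (p y)}
  (R : ∀ s : S, RKHSOn.{u, uΓ, uS, v, vO, w, w'} 𝕜 E A p K s) {s : S}

lemma Kx_add (x : {x : X // A.a x = s}) (h k : E (p x.val)) :
    (R s).Kx x (h + k) = (R s).Kx x h + (R s).Kx x k := by
  apply (R s).emb_inj
  rw [map_add]
  funext y
  simp only [Pi.add_apply, (R s).emb_Kx, map_add]

lemma Kx_smul (x : {x : X // A.a x = s}) (c : 𝕜) (h : E (p x.val)) :
    (R s).Kx x (c • h) = c • (R s).Kx x h := by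
  apply (R s).emb_inj
  rw [map_smul]
  funext y
  simp only [Pi.smul_apply, (R s).emb_Kx, map_smul]

/-- `Kx` as a linear map. -/
def KxLin (x : {x : X // A.a x = s}) : E (p x.val) →ₗ[𝕜] (R s).carrier where
  toFun := (R s).Kx x
  map_add' := Kx_add R x
  map_smul' := Kx_smul R x

lemma inner_Kx (x y : {x : X // A.a x = s}) (h : E (p x.val)) (k : E (p y.val)) :
    ⟪(R s).Kx x h, (R s).Kx y k⟫_𝕜 = ⟪K y.val x.val h, k⟫_𝕜 := by
  rw [← (R s).repro, (R s).emb_Kx]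

/-- `Kx` as a continuous linear map. -/
def KxCLM (x : {x : X // A.a x = s}) : E (p x.val) →L[𝕜] (R s).carrier :=
  LinearMap.mkContinuous (KxLin R x) (Real.sqrt ‖K x.val x.val‖) (by
    intro h
    have h1 : ‖(R s).Kx x h‖ ^ 2 = RCLike.re ⟪K x.val x.val h, h⟫_𝕜 := by
      rw [← inner_Kx R x x h h, inner_self_eq_norm_sq]
    have h3 : ‖(R s).Kx x h‖ ^ 2 ≤ (Real.sqrt ‖K x.val x.val‖ * ‖h‖) ^ 2 := by
      rw [h1, mul_pow, Real.sq_sqrt (norm_nonneg _)]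
      calc RCLike.re ⟪K x.val x.val h, h⟫_𝕜 ≤ ‖⟪K x.val x.val h, h⟫_𝕜‖ := RCLike.re_le_norm _
      _ ≤ ‖K x.val x.val h‖ * ‖h‖ := norm_inner_le_norm _ _
      _ ≤ ‖K x.val x.val‖ * ‖h‖ * ‖h‖ :=
          mul_le_mul_of_nonneg_right ((K x.val x.val).le_opNorm h) (norm_nonneg h)
      _ = ‖K x.val x.val‖ * ‖h‖ ^ 2 := by ring
    calc ‖(R s).Kx x h‖ = Real.sqrt (‖(R s).Kx x h‖ ^ 2) := (Real.sqrt_sq (norm_nonneg _)).symm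
    _ ≤ Real.sqrt ((Real.sqrt ‖K x.val x.val‖ * ‖h‖) ^ 2) := Real.sqrt_le_sqrt h3
    _ = Real.sqrt ‖K x.val x.val‖ * ‖h‖ := Real.sqrt_sq (by positivity))

@[simp] lemma KxCLM_apply (x : {x : X // A.a x = s}) (h : E (p x.val)) :
    KxCLM R x h = (R s).Kx x h := rfl

lemma dense_Kx :
    Dense (Submodule.span 𝕜 (Set.range (fun q : Σ x : {x : X // A.a x = s}, E (p x.val) =>
      (R s).Kx q.1 q.2)) : Set (R s).carrier) := by
  set D := Submodule.span 𝕜 (Set.range (fun q : Σ x : {x : X // A.a x = s}, E (p x.val) =>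
      (R s).Kx q.1 q.2)) with hD
  have h1 : D.topologicalClosure = ⊤ := by
    rw [Submodule.topologicalClosure_eq_top_iff, Submodule.eq_bot_iff]
    intro f hf
    have hq : ∀ (x : {x : X // A.a x = s}) (h : E (p x.val)), ⟪f, (R s).Kx x h⟫_𝕜 = 0 := by
      intro x h
      have := (Submodule.mem_orthogonal D f).mp hf ((R s).Kx x h)
        (Submodule.subset_span ⟨⟨x, h⟩, rfl⟩)
      exact inner_eq_zero_symm.mp this
    have hemb : (R s).emb f = 0 := by
      funext x
      have h2 : ∀ h : E (p x.val), ⟪(R s).emb f x, h⟫_𝕜 = 0 := by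
        intro h
        rw [(R s).repro]
        exact hq x h
      have := h2 ((R s).emb f x)
      exact inner_self_eq_zero.mp this
    apply (R s).emb_inj
    rw [hemb, map_zero]
  rw [dense_iff_closure_eq, ← Submodule.topologicalClosure_coe, h1, Submodule.top_coe]

lemma re_sum_eq_norm_sq (n : ℕ) (z : Fin n → X) (hz : ∀ i, A.a (z i) = s)
    (g : ∀ i, E (p (z i))) :
    RCLike.re (∑ i, ∑ j, ⟪K (z j) (z i) (g i), g j⟫_𝕜) =
      ‖∑ i, (R s).Kx ⟨z i, hz i⟩ (g i)‖ ^ 2 := by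
  rw [← inner_self_eq_norm_sq (𝕜 := 𝕜)]
  congr 1
  rw [sum_inner]
  refine Finset.sum_congr rfl fun i _ => ?_
  rw [inner_sum]
  exact Finset.sum_congr rfl fun j _ =>
    (inner_Kx R ⟨z i, hz i⟩ ⟨z j, hz j⟩ (g i) (g j)).symm

lemma exists_fin_rep (f : (Σ x : {x : X // A.a x = s}, E (p x.val)) →₀ 𝕜) :
    ∃ (n : ℕ) (z : Fin n → {x : X // A.a x = s}) (g : ∀ i, E (p (z i).val)),
      ∀ {FF : Type*} [NormedAddCommGroup FF] [NormedSpace 𝕜 FF]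
        (W : ∀ x : {x : X // A.a x = s}, E (p x.val) →ₗ[𝕜] FF),
        Finsupp.linearCombination 𝕜 (fun q => W q.1 q.2) f = ∑ i, W (z i) (g i) := by
  classical
  refine ⟨f.support.card, fun i => (f.support.equivFin.symm i).1.1,
    fun i => f (f.support.equivFin.symm i).1 • (f.support.equivFin.symm i).1.2, ?_⟩
  intro FF _ _ W
  rw [Finsupp.linearCombination_apply, Finsupp.sum]
  have h1 : ∀ q ∈ f.support, f q • W q.1 q.2 = W q.1 (f q • q.2) :=
    fun q _ => (map_smul _ _ _).symm
  rw [Finset.sum_congr rfl h1]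
  rw [← Finset.sum_attach f.support (fun q => W q.1 (f q • q.2))]
  exact (Equiv.sum_comp f.support.equivFin.symm
    (fun q : f.support => W q.1.1 (f q.1 • q.1.2))).symm

end KernelSec
section PhiSec
set_option linter.unusedSectionVars false
set_option maxHeartbeats 1000000

variable {A} {p}
variable {K : ∀ y x : X, E (p x) →L[𝕜] E (p y)}
  (R : ∀ s : S, RKHSOn.{u, uΓ, uS, v, vO, w, w'} 𝕜 E A p K s)

lemma castR_Kx {s t : S} (hst : s = t) (x : X) (hx : A.a x = s) (h : E (p x)) :
    castR A p R hst ((R s).Kx ⟨x, hx⟩ h) = (R t).Kx ⟨x, hx.trans hst⟩ h := by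
  subst hst; rfl

lemma Kx_congr {s : S} {x y : X} (hxy : x = y) (hx : A.a x = s) (hy : A.a y = s)
    (h : E (p x)) :
    (R s).Kx ⟨x, hx⟩ h = (R s).Kx ⟨y, hy⟩ (castE 𝕜 E (congrArg p hxy) h) := by
  subst hxy; rfl

lemma inner_K_shift (hK : PartPSD A p K) (hKinv : GammaInvariant A p hp K)
    (α : Γ) (x y : X) (hx : G.d α = A.a x) (hy : G.c α = A.a y)
    (h : E (p x)) (k : E (p y)) :
    ⟪K y (A.act α x) ((castE 𝕜 E (hp hx)).symm h), k⟫_𝕜 =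
      ⟪K (A.act (G.star α) y) x h, (castE 𝕜 E (hp ((G.d_star α).trans hy))).symm k⟫_𝕜 := by
  have had : ContinuousLinearMap.adjoint (K (A.act α x) y) = K y (A.act α x) :=
    hK.1 (A.act α x) y (by rw [A.a_act hx, ← hy])
  have had2 : ContinuousLinearMap.adjoint (K x (A.act (G.star α) y)) =
      K (A.act (G.star α) y) x :=
    hK.1 x (A.act (G.star α) y) (by rw [A.a_act ((G.d_star α).trans hy), G.c_star, hx])
  rw [← had, ContinuousLinearMap.adjoint_inner_left]
  rw [← had2, ContinuousLinearMap.adjoint_inner_left]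
  have h2 : K (A.act α x) y k =
      (castE 𝕜 E (hp hx)).symm (castE 𝕜 E (hp hx) (K (A.act α x) y k)) :=
    (LinearIsometryEquiv.symm_apply_apply _ _).symm
  rw [h2, LinearIsometryEquiv.inner_map_map, hKinv α x y hx hy k]

lemma exists_Phi (hBST : BoundedShiftType A p hp K) :
    ∃ Φ : ∀ α : Γ, (R (G.d α)).carrier →L[𝕜] (R (G.c α)).carrier,
      ∀ (α : Γ) (x : X) (hx : G.d α = A.a x) (h : E (p x)),
        Φ α ((R (G.d α)).Kx ⟨x, hx.symm⟩ h) =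
          (R (G.c α)).Kx ⟨A.act α x, A.a_act hx⟩ ((castE 𝕜 E (hp hx)).symm h) := by
  have hchoice : ∀ α : Γ, ∃ Φα : (R (G.d α)).carrier →L[𝕜] (R (G.c α)).carrier,
      ∀ (x : X) (hx : G.d α = A.a x) (h : E (p x)),
        Φα ((R (G.d α)).Kx ⟨x, hx.symm⟩ h) =
          (R (G.c α)).Kx ⟨A.act α x, A.a_act hx⟩ ((castE 𝕜 E (hp hx)).symm h) := by
    intro α
    obtain ⟨M, hM0, hMb⟩ := hBST α
    set ι := (Σ x : {x : X // A.a x = G.d α}, E (p x.val)) with hι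
    set vm : ι → (R (G.d α)).carrier := fun q => (R (G.d α)).Kx q.1 q.2 with hvm
    set Wv : ∀ x : {x : X // A.a x = G.d α}, E (p x.val) →ₗ[𝕜] (R (G.d α)).carrier :=
      fun x => KxLin R x with hWv
    set Ww : ∀ x : {x : X // A.a x = G.d α}, E (p x.val) →ₗ[𝕜] (R (G.c α)).carrier :=
      fun x => (KxLin R ⟨A.act α x.val, A.a_act x.2.symm⟩).comp
        ((castE 𝕜 E (hp x.2.symm)).symm.toLinearEquiv.toLinearMap) with hWw
    set wm : ι → (R (G.c α)).carrier := fun q => Ww q.1 q.2 with hwm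
    have hb : ∀ f : ι →₀ 𝕜, ‖Finsupp.linearCombination 𝕜 wm f‖ ≤
        Real.sqrt M * ‖Finsupp.linearCombination 𝕜 vm f‖ := by
      intro f
      obtain ⟨n, z, g, hrep⟩ := exists_fin_rep f
      have hv1 : Finsupp.linearCombination 𝕜 vm f = ∑ i, (R (G.d α)).Kx (z i) (g i) :=
        hrep Wv
      have hw1 : Finsupp.linearCombination 𝕜 wm f =
          ∑ i, (R (G.c α)).Kx ⟨A.act α (z i).val, A.a_act (z i).2.symm⟩
            ((castE 𝕜 E (hp (z i).2.symm)).symm (g i)) := hrep Ww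
      have hzsub : ∀ i, (⟨(z i).val, (z i).2⟩ : {x : X // A.a x = G.d α}) = z i :=
        fun i => rfl
      have hvsq : ‖Finsupp.linearCombination 𝕜 vm f‖ ^ 2 =
          RCLike.re (∑ i, ∑ j, ⟪K (z j).val (z i).val (g i), g j⟫_𝕜) := by
        rw [hv1, ← re_sum_eq_norm_sq R n (fun i => (z i).val) (fun i => (z i).2) g]
      have hwsq : ‖Finsupp.linearCombination 𝕜 wm f‖ ^ 2 =
          RCLike.re (∑ i, ∑ j, ⟪K (A.act α ((z j).val)) (A.act α ((z i).val))
            ((castE 𝕜 E (hp (z i).2.symm)).symm (g i)),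
            ((castE 𝕜 E (hp (z j).2.symm)).symm (g j))⟫_𝕜) := by
        rw [hw1, ← re_sum_eq_norm_sq R n (fun i => A.act α (z i).val)
          (fun i => A.a_act (z i).2.symm)
          (fun i => (castE 𝕜 E (hp (z i).2.symm)).symm (g i))]
      have hineq := hMb n (fun i => (z i).val) (fun i => (z i).2.symm) g
      have hsq : ‖Finsupp.linearCombination 𝕜 wm f‖ ^ 2 ≤
          M * ‖Finsupp.linearCombination 𝕜 vm f‖ ^ 2 := by
        rw [hwsq, hvsq]; exact hineq
      calc ‖Finsupp.linearCombination 𝕜 wm f‖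
          = Real.sqrt (‖Finsupp.linearCombination 𝕜 wm f‖ ^ 2) :=
            (Real.sqrt_sq (norm_nonneg _)).symm
        _ ≤ Real.sqrt (M * ‖Finsupp.linearCombination 𝕜 vm f‖ ^ 2) := Real.sqrt_le_sqrt hsq
        _ = Real.sqrt M * ‖Finsupp.linearCombination 𝕜 vm f‖ := by
            rw [Real.sqrt_mul hM0, Real.sqrt_sq (norm_nonneg _)]
    obtain ⟨Φα, hΦv, _⟩ := exists_bounded_extension vm wm (dense_Kx R) (Real.sqrt M)
      (Real.sqrt_nonneg M) hb
    exact ⟨Φα, fun x hx h => hΦv ⟨⟨x, hx.symm⟩, h⟩⟩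
  choose Φ hΦ using hchoice
  exact ⟨Φ, hΦ⟩

end PhiSec
section CopySec
set_option linter.unusedSectionVars false
set_option maxHeartbeats 1000000

universe w''

/-- Copy of a Hilbert space in the universe of an ambient module into which it
injects linearly. -/
noncomputable def copyHSp {EE : Type w'} [NormedAddCommGroup EE] [InnerProductSpace 𝕜 EE]
    [CompleteSpace EE] {M : Type w''} [AddCommGroup M] [Module 𝕜 M]
    (f : EE →ₗ[𝕜] M) (hf : Function.Injective f) :
    Σ' (H : HSp.{u, w''} 𝕜), EE ≃ₗᵢ[𝕜] H.carrier := by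
  let N := LinearMap.range f
  let e : EE ≃ₗ[𝕜] N := LinearEquiv.ofInjective f hf
  letI : Inner 𝕜 N := ⟨fun a b => ⟪e.symm a, e.symm b⟫_𝕜⟩
  have hin : ∀ a b : N, ⟪a, b⟫_𝕜 = ⟪e.symm a, e.symm b⟫_𝕜 := fun a b => rfl
  letI core : InnerProductSpace.Core 𝕜 N :=
  { inner := fun a b => ⟪e.symm a, e.symm b⟫_𝕜
    conj_inner_symm := fun a b => inner_conj_symm _ _
    re_inner_nonneg := fun a => inner_self_nonneg
    add_left := fun a b c => by
      show ⟪e.symm (a + b), e.symm c⟫_𝕜 = ⟪e.symm a, e.symm c⟫_𝕜 + ⟪e.symm b, e.symm c⟫_𝕜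
      rw [map_add, inner_add_left]
    smul_left := fun a b r => by
      show ⟪e.symm (r • a), e.symm b⟫_𝕜 = (starRingEnd 𝕜) r * ⟪e.symm a, e.symm b⟫_𝕜
      rw [map_smul, inner_smul_left]
    definite := fun a ha => by
      have h0 : e.symm a = 0 := inner_self_eq_zero.mp ha
      have := congrArg e h0
      rwa [e.apply_symm_apply, map_zero] at this }
  letI ng : NormedAddCommGroup N := core.toNormedAddCommGroup
  letI ip : InnerProductSpace 𝕜 N := InnerProductSpace.ofCore core.toCore
  have hiso : ∀ x : EE, ‖e x‖ = ‖x‖ := by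
    intro x
    rw [@norm_eq_sqrt_re_inner 𝕜 N, @norm_eq_sqrt_re_inner 𝕜 EE]
    congr 2
    rw [hin, e.symm_apply_apply]
  let iso : EE ≃ₗᵢ[𝕜] N := ⟨e, hiso⟩
  letI cs : CompleteSpace N :=
    (iso.isometry.isUniformInducing.completeSpace_congr
      iso.surjective).mp (inferInstance : CompleteSpace EE)
  exact ⟨⟨N⟩, iso⟩

end CopySec
section PhiFullSec
set_option linter.unusedSectionVars false
set_option maxHeartbeats 1000000

variable {A} {p}
variable {K : ∀ y x : X, E (p x) →L[𝕜] E (p y)}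
  (R : ∀ s : S, RKHSOn.{u, uΓ, uS, v, vO, w, w'} 𝕜 E A p K s)

lemma inner_K_shift' (hK : PartPSD A p K) (hKinv : GammaInvariant A p hp K)
    (α : Γ) (x y : X) (hx : G.d α = A.a x) (hy : G.c α = A.a y)
    (h : E (p x)) (k : E (p y)) :
    ⟪K (A.act α x) y k, (castE 𝕜 E (hp hx)).symm h⟫_𝕜 =
      ⟪K x (A.act (G.star α) y) ((castE 𝕜 E (hp ((G.d_star α).trans hy))).symm k), h⟫_𝕜 := by
  have h1 := inner_K_shift hp hK hKinv α x y hx hy h k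
  have h2 := congrArg (starRingEnd 𝕜) h1
  rw [inner_conj_symm, inner_conj_symm] at h2
  have had : ContinuousLinearMap.adjoint (K (A.act α x) y) = K y (A.act α x) :=
    hK.1 (A.act α x) y (by rw [A.a_act hx, ← hy])
  have had2 : ContinuousLinearMap.adjoint (K x (A.act (G.star α) y)) =
      K (A.act (G.star α) y) x :=
    hK.1 x (A.act (G.star α) y) (by rw [A.a_act ((G.d_star α).trans hy), G.c_star, hx])
  rw [← had, ContinuousLinearMap.adjoint_inner_right] at h2
  rw [← had2, ContinuousLinearMap.adjoint_inner_right] at h2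
  exact h2

lemma exists_Phi_full (hK : PartPSD A p K) (hKinv : GammaInvariant A p hp K)
    (hBST : BoundedShiftType A p hp K) :
    ∃ Φ : ∀ α : Γ, (R (G.d α)).carrier →L[𝕜] (R (G.c α)).carrier,
      ((∀ (α β : Γ) (hc : G.d α = G.c β) (f : (R (G.d β)).carrier),
        Φ (G.mul α β) (castR A p R (G.d_mul hc).symm f) =
          castR A p R (G.c_mul hc).symm
            (Φ α (castR A p R hc.symm (Φ β f)))) ∧
      (∀ (α : Γ) (g : (R (G.c α)).carrier),
        castR A p R (G.c_star α)
            (Φ (G.star α) (castR A p R (G.d_star α).symm g)) =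
          ContinuousLinearMap.adjoint (Φ α) g) ∧
      (∀ (α : Γ) (x : X) (hx : G.d α = A.a x) (h : E (p x)),
        Φ α ((R (G.d α)).Kx ⟨x, hx.symm⟩ h) =
          (R (G.c α)).Kx ⟨A.act α x, A.a_act hx⟩
            ((castE 𝕜 E (hp hx)).symm h))) := by
  obtain ⟨Φ, hΦ⟩ := exists_Phi hp R hBST
  refine ⟨Φ, ?_, ?_, hΦ⟩
  · -- multiplicativity
    intro α β hc f
    have hext : (Φ (G.mul α β)).comp
        ((castR A p R (G.d_mul hc).symm).toLinearIsometry.toContinuousLinearMap) =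
        ((castR A p R (G.c_mul hc).symm).toLinearIsometry.toContinuousLinearMap).comp
          ((Φ α).comp
            (((castR A p R hc.symm).toLinearIsometry.toContinuousLinearMap).comp (Φ β))) := by
      apply denseSpan_ext (dense_Kx R)
      rintro ⟨⟨x, hx⟩, h⟩
      simp only [ContinuousLinearMap.comp_apply, LinearIsometry.coe_toContinuousLinearMap,
        LinearIsometryEquiv.coe_toLinearIsometry]
      rw [castR_Kx R (G.d_mul hc).symm x hx h]
      rw [hΦ (G.mul α β) x ((G.d_mul hc).trans hx.symm) h]
      rw [hΦ β x hx.symm h]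
      rw [castR_Kx R hc.symm (A.act β x) (A.a_act hx.symm)
        ((castE 𝕜 E (hp hx.symm)).symm h)]
      rw [hΦ α (A.act β x) (hc.trans (A.a_act hx.symm).symm)
        ((castE 𝕜 E (hp hx.symm)).symm h)]
      rw [castR_Kx]
      rw [Kx_congr R (A.act_mul hx.symm hc)
        (A.a_act ((G.d_mul hc).trans hx.symm))
        ((A.a_act (hc.trans (A.a_act hx.symm).symm)).trans (G.c_mul hc).symm)]
      simp only [castE_symm_eq, castE_trans']
    exact DFunLike.congr_fun hext f
  · -- star
    intro α g
    have hadj : ((castR A p R (G.c_star α)).toLinearIsometry.toContinuousLinearMap).comp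
          ((Φ (G.star α)).comp
            ((castR A p R (G.d_star α).symm).toLinearIsometry.toContinuousLinearMap)) =
        ContinuousLinearMap.adjoint (Φ α) := by
      apply denseSpan_ext (dense_Kx R)
      rintro ⟨⟨y, hy⟩, k⟩
      simp only [ContinuousLinearMap.comp_apply, LinearIsometry.coe_toContinuousLinearMap,
        LinearIsometryEquiv.coe_toLinearIsometry]
      rw [castR_Kx R (G.d_star α).symm y hy k]
      rw [hΦ (G.star α) y ((G.d_star α).trans hy.symm) k]
      rw [castR_Kx]
      have hfun : (innerSL 𝕜 ((R (G.d α)).Kx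
            ⟨A.act (G.star α) y,
              (A.a_act ((G.d_star α).trans hy.symm)).trans (G.c_star α)⟩
            ((castE 𝕜 E (hp ((G.d_star α).trans hy.symm))).symm k)) :
            (R (G.d α)).carrier →L[𝕜] 𝕜) =
          innerSL 𝕜 (ContinuousLinearMap.adjoint (Φ α) ((R (G.c α)).Kx ⟨y, hy⟩ k)) := by
        apply denseSpan_ext (dense_Kx R)
        rintro ⟨⟨x, hx⟩, h⟩
        simp only [innerSL_apply_apply]
        rw [ContinuousLinearMap.adjoint_inner_left]
        rw [hΦ α x hx.symm h]
        rw [inner_Kx, inner_Kx]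
        exact (inner_K_shift' hp hK hKinv α x y hx.symm hy.symm h k).symm
      refine ext_inner_right 𝕜 ?_
      intro f
      have := DFunLike.congr_fun hfun f
      simpa only [innerSL_apply_apply] using this
    exact DFunLike.congr_fun hadj g

lemma bst_of_Phi (Φ : ∀ α : Γ, (R (G.d α)).carrier →L[𝕜] (R (G.c α)).carrier)
    (hshift : ∀ (α : Γ) (x : X) (hx : G.d α = A.a x) (h : E (p x)),
      Φ α ((R (G.d α)).Kx ⟨x, hx.symm⟩ h) =
        (R (G.c α)).Kx ⟨A.act α x, A.a_act hx⟩ ((castE 𝕜 E (hp hx)).symm h)) :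
    BoundedShiftType A p hp K := by
  intro α
  refine ⟨‖Φ α‖ ^ 2, sq_nonneg _, ?_⟩
  intro n z hz g
  have hL := re_sum_eq_norm_sq R n (fun i => A.act α (z i)) (fun i => A.a_act (hz i))
    (fun i => (castE 𝕜 E (hp (hz i))).symm (g i))
  have hR := re_sum_eq_norm_sq R n z (fun i => (hz i).symm) g
  have hsum : (∑ i, (R (G.c α)).Kx ⟨A.act α (z i), A.a_act (hz i)⟩
      ((castE 𝕜 E (hp (hz i))).symm (g i))) =
      Φ α (∑ i, (R (G.d α)).Kx ⟨z i, (hz i).symm⟩ (g i)) := by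
    rw [map_sum]
    exact Finset.sum_congr rfl fun i _ => (hshift α (z i) (hz i) (g i)).symm
  refine le_trans (le_of_eq hL) (le_trans ?_
    (le_of_eq (congrArg (fun t => ‖Φ α‖ ^ 2 * t) hR.symm)))
  rw [hsum]
  calc ‖Φ α (∑ i, (R (G.d α)).Kx ⟨z i, (hz i).symm⟩ (g i))‖ ^ 2
      ≤ (‖Φ α‖ * ‖∑ i, (R (G.d α)).Kx ⟨z i, (hz i).symm⟩ (g i)‖) ^ 2 := by
        apply pow_le_pow_left₀ (norm_nonneg _) ((Φ α).le_opNorm _)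
    _ = ‖Φ α‖ ^ 2 * ‖∑ i, (R (G.d α)).Kx ⟨z i, (hz i).symm⟩ (g i)‖ ^ 2 := by ring

end PhiFullSec
section InvLinSec
set_option linter.unusedSectionVars false
set_option maxHeartbeats 1000000

universe wL wL'

variable {A} {p}
variable {K : ∀ y x : X, E (p x) →L[𝕜] E (p y)}

lemma re_sum_eq_norm_sq_V (L : InvLin.{u, uΓ, uS, v, vO, w, wL} 𝕜 E A p hp K)
    {s : S} (n : ℕ) (z : Fin n → X) (hz : ∀ i, A.a (z i) = s) (g : ∀ i, E (p (z i))) :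
    RCLike.re (∑ i, ∑ j, ⟪K (z j) (z i) (g i), g j⟫_𝕜) =
      ‖∑ i, castH 𝕜 L.Ksp (hz i) (L.V (z i) (g i))‖ ^ 2 := by
  rw [← inner_self_eq_norm_sq (𝕜 := 𝕜)]
  congr 1
  rw [sum_inner]
  refine Finset.sum_congr rfl fun i _ => ?_
  rw [inner_sum]
  refine Finset.sum_congr rfl fun j _ => ?_
  rw [castH_inner_castH L.Ksp (hz i) (hz j)]
  exact L.lin (z j) (z i) ((hz i).trans (hz j).symm) (g i) (g j)

lemma bst_of_InvLin (L : InvLin.{u, uΓ, uS, v, vO, w, wL} 𝕜 E A p hp K) :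
    BoundedShiftType A p hp K := by
  intro α
  refine ⟨‖L.Ψ α‖ ^ 2, sq_nonneg _, ?_⟩
  intro n z hz g
  have hL := re_sum_eq_norm_sq_V hp L n (fun i => A.act α (z i)) (fun i => A.a_act (hz i))
    (fun i => (castE 𝕜 E (hp (hz i))).symm (g i))
  have hR := re_sum_eq_norm_sq_V hp L n z (fun i => (hz i).symm) g
  have hsum : (∑ i, castH 𝕜 L.Ksp (A.a_act (hz i))
      (L.V (A.act α (z i)) ((castE 𝕜 E (hp (hz i))).symm (g i)))) =
      L.Ψ α (∑ i, castH 𝕜 L.Ksp (hz i).symm (L.V (z i) (g i))) := by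
    rw [map_sum]
    exact Finset.sum_congr rfl fun i _ => (L.Ψ_shift α (z i) (hz i) (g i)).symm
  refine le_trans (le_of_eq hL) (le_trans ?_
    (le_of_eq (congrArg (fun t => ‖L.Ψ α‖ ^ 2 * t) hR.symm)))
  rw [hsum]
  calc ‖L.Ψ α (∑ i, castH 𝕜 L.Ksp (hz i).symm (L.V (z i) (g i)))‖ ^ 2
      ≤ (‖L.Ψ α‖ * ‖∑ i, castH 𝕜 L.Ksp (hz i).symm (L.V (z i) (g i))‖) ^ 2 := by
        apply pow_le_pow_left₀ (norm_nonneg _) ((L.Ψ α).le_opNorm _)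
    _ = ‖L.Ψ α‖ ^ 2 * ‖∑ i, castH 𝕜 L.Ksp (hz i).symm (L.V (z i) (g i))‖ ^ 2 := by ring

lemma invLin_unique (L : InvLin.{u, uΓ, uS, v, vO, w, wL} 𝕜 E A p hp K)
    (L' : InvLin.{u, uΓ, uS, v, vO, w, wL'} 𝕜 E A p hp K)
    (hm : InvLin.Minimal L) (hm' : InvLin.Minimal L') :
    ∃ U : ∀ s : S, (L.Ksp s).carrier ≃ₗᵢ[𝕜] (L'.Ksp s).carrier,
      (∀ (α : Γ) (f : (L.Ksp (G.d α)).carrier),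
        U (G.c α) (L.Ψ α f) = L'.Ψ α (U (G.d α) f)) ∧
      (∀ (x : X) (h : E (p x)), U (A.a x) (L.V x h) = L'.V x h) := by
  have hdense : ∀ s : S, Dense (Submodule.span 𝕜 (Set.range
      (fun q : Σ x : {x : X // A.a x = s}, E (p x.val) =>
        castH 𝕜 L.Ksp q.1.2 (L.V q.1.1 q.2))) : Set (L.Ksp s).carrier) := by
    intro s
    have hr := Set.range_sigma_eq_iUnion_range
      (fun q : Σ x : {x : X // A.a x = s}, E (p x.val) =>
        castH 𝕜 L.Ksp q.1.2 (L.V q.1.1 q.2))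
    rw [hr]
    exact hm s
  have hdense' : ∀ s : S, Dense (Submodule.span 𝕜 (Set.range
      (fun q : Σ x : {x : X // A.a x = s}, E (p x.val) =>
        castH 𝕜 L'.Ksp q.1.2 (L'.V q.1.1 q.2))) : Set (L'.Ksp s).carrier) := by
    intro s
    have hr := Set.range_sigma_eq_iUnion_range
      (fun q : Σ x : {x : X // A.a x = s}, E (p x.val) =>
        castH 𝕜 L'.Ksp q.1.2 (L'.V q.1.1 q.2))
    rw [hr]
    exact hm' s
  have hUex : ∀ s : S, ∃ U : (L.Ksp s).carrier ≃ₗᵢ[𝕜] (L'.Ksp s).carrier,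
      ∀ q : Σ x : {x : X // A.a x = s}, E (p x.val),
        U (castH 𝕜 L.Ksp q.1.2 (L.V q.1.1 q.2)) =
          castH 𝕜 L'.Ksp q.1.2 (L'.V q.1.1 q.2) := by
    intro s
    apply exists_unitary _ _ (hdense s) (hdense' s)
    intro q q'
    rw [castH_inner_castH L.Ksp q.1.2 q'.1.2, castH_inner_castH L'.Ksp q.1.2 q'.1.2]
    rw [← L.lin q'.1.1 q.1.1 (q.1.2.trans q'.1.2.symm) q.2 q'.2]
    rw [← L'.lin q'.1.1 q.1.1 (q.1.2.trans q'.1.2.symm) q.2 q'.2]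
  choose U hU using hUex
  refine ⟨U, ?_, ?_⟩
  · intro α f
    have hext : ((U (G.c α)).toLinearIsometry.toContinuousLinearMap).comp (L.Ψ α) =
        (L'.Ψ α).comp ((U (G.d α)).toLinearIsometry.toContinuousLinearMap) := by
      apply denseSpan_ext (hdense (G.d α))
      rintro ⟨⟨x, hx⟩, h⟩
      simp only [ContinuousLinearMap.comp_apply, LinearIsometry.coe_toContinuousLinearMap,
        LinearIsometryEquiv.coe_toLinearIsometry]
      have h1 := L.Ψ_shift α x hx.symm h
      have h1' := L'.Ψ_shift α x hx.symm h
      rw [h1, hU (G.d α) ⟨⟨x, hx⟩, h⟩, h1']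
      exact hU (G.c α) ⟨⟨A.act α x, A.a_act hx.symm⟩, (castE 𝕜 E (hp hx.symm)).symm h⟩
    exact DFunLike.congr_fun hext f
  · intro x h
    have := hU (A.a x) ⟨⟨x, rfl⟩, h⟩
    exact this

end InvLinSec
section ConstructSec
set_option linter.unusedSectionVars false
set_option maxHeartbeats 1000000

universe wH2

lemma dense_span_image {EE GG : Type*} [NormedAddCommGroup EE] [NormedSpace 𝕜 EE]
    [NormedAddCommGroup GG] [NormedSpace 𝕜 GG] (e : EE ≃ₗᵢ[𝕜] GG) {T : Set EE}
    (hd : Dense (Submodule.span 𝕜 T : Set EE)) :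
    Dense (Submodule.span 𝕜 (⇑e '' T) : Set GG) := by
  have h1 : Submodule.span 𝕜 (⇑e '' T) =
      Submodule.map (e.toLinearEquiv.toLinearMap) (Submodule.span 𝕜 T) := by
    rw [← Submodule.span_image]
    rfl
  rw [dense_iff_closure_eq] at hd ⊢
  have h2 : (↑(Submodule.span 𝕜 (⇑e '' T)) : Set GG) =
      ⇑e '' ↑(Submodule.span 𝕜 T) := by
    rw [h1]; rfl
  rw [h2]
  calc closure (⇑e '' ↑(Submodule.span 𝕜 T))
      = ⇑e '' closure ↑(Submodule.span 𝕜 T) := (e.toHomeomorph.image_closure _).symm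
    _ = ⇑e '' Set.univ := by rw [hd]
    _ = Set.univ := by rw [Set.image_univ]; exact e.surjective.range_eq

variable {A} {p}
variable {K : ∀ y x : X, E (p x) →L[𝕜] E (p y)}
  (R : ∀ s : S, RKHSOn.{u, uΓ, uS, v, vO, w, w'} 𝕜 E A p K s)

lemma castH_iso {𝒦 : S → HSp.{u, wH2} 𝕜} (U : ∀ s : S, (R s).carrier ≃ₗᵢ[𝕜] (𝒦 s).carrier)
    {s t : S} (hst : s = t) (f : (R s).carrier) :
    castH 𝕜 𝒦 hst (U s f) = U t (castR A p R hst f) := by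
  subst hst; rfl

noncomputable def KspDef (R : ∀ s : S, RKHSOn.{u, uΓ, uS, v, vO, w, w'} 𝕜 E A p K s)
    (s : S) : HSp.{u, max v w} 𝕜 :=
  (copyHSp (R s).emb (R s).emb_inj).1

noncomputable def UDef (R : ∀ s : S, RKHSOn.{u, uΓ, uS, v, vO, w, w'} 𝕜 E A p K s)
    (s : S) : (R s).carrier ≃ₗᵢ[𝕜] (KspDef R s).carrier :=
  (copyHSp (R s).emb (R s).emb_inj).2

noncomputable def VDef (R : ∀ s : S, RKHSOn.{u, uΓ, uS, v, vO, w, w'} 𝕜 E A p K s)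
    (x : X) : E (p x) →L[𝕜] (KspDef R (A.a x)).carrier :=
  ((UDef R (A.a x)).toLinearIsometry.toContinuousLinearMap).comp (KxCLM R ⟨x, rfl⟩)

noncomputable def PsiDef (R : ∀ s : S, RKHSOn.{u, uΓ, uS, v, vO, w, w'} 𝕜 E A p K s)
    (Φ : ∀ α : Γ, (R (G.d α)).carrier →L[𝕜] (R (G.c α)).carrier) (α : Γ) :
    (KspDef R (G.d α)).carrier →L[𝕜] (KspDef R (G.c α)).carrier :=
  ((UDef R (G.c α)).toLinearIsometry.toContinuousLinearMap).comp
    ((Φ α).comp ((UDef R (G.d α)).symm.toLinearIsometry.toContinuousLinearMap))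

lemma exists_minimal_invLin
    (R : ∀ s : S, RKHSOn.{u, uΓ, uS, v, vO, w, w'} 𝕜 E A p K s)
    (hK : PartPSD A p K) (hKinv : GammaInvariant A p hp K)
    (hBST : BoundedShiftType A p hp K) :
    ∃ L : InvLin.{u, uΓ, uS, v, vO, w, max v w} 𝕜 E A p hp K, InvLin.Minimal L := by
  obtain ⟨Φ, hmul, hstar, hshift⟩ := exists_Phi_full hp R hK hKinv hBST
  refine ⟨{ Ksp := KspDef R
            V := VDef R
            lin := ?_
            Ψ := PsiDef R Φ
            Ψ_mul := ?_
            Ψ_star := ?_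
            Ψ_shift := ?_ }, ?_⟩
  · -- lin
    intro x y hxy k h
    simp only [VDef, ContinuousLinearMap.comp_apply,
      LinearIsometry.coe_toContinuousLinearMap,
      LinearIsometryEquiv.coe_toLinearIsometry, KxCLM_apply]
    rw [castH_iso R (UDef R) hxy, castR_Kx R hxy y rfl k,
      LinearIsometryEquiv.inner_map_map]
    exact (inner_Kx R ⟨y, (rfl : A.a y = A.a y).trans hxy⟩ ⟨x, rfl⟩ k h).symm
  · -- Ψ_mul
    intro α β hc f
    obtain ⟨f', rfl⟩ : ∃ f', f = UDef R (G.d β) f' :=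
      ⟨(UDef R (G.d β)).symm f, ((UDef R (G.d β)).apply_symm_apply f).symm⟩
    simp only [PsiDef, ContinuousLinearMap.comp_apply,
      LinearIsometry.coe_toContinuousLinearMap,
      LinearIsometryEquiv.coe_toLinearIsometry]
    rw [castH_iso R (UDef R) (G.d_mul hc).symm, LinearIsometryEquiv.symm_apply_apply,
      LinearIsometryEquiv.symm_apply_apply, castH_iso R (UDef R) hc.symm,
      LinearIsometryEquiv.symm_apply_apply, hmul α β hc f',
      castH_iso R (UDef R) (G.c_mul hc).symm]
  · -- Ψ_star
    intro α g
    obtain ⟨g', rfl⟩ : ∃ g', g = UDef R (G.c α) g' :=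
      ⟨(UDef R (G.c α)).symm g, ((UDef R (G.c α)).apply_symm_apply g).symm⟩
    have hadj : (((UDef R (G.d α)).toLinearIsometry.toContinuousLinearMap).comp
          ((ContinuousLinearMap.adjoint (Φ α)).comp
            ((UDef R (G.c α)).symm.toLinearIsometry.toContinuousLinearMap))) =
        ContinuousLinearMap.adjoint (PsiDef R Φ α) := by
      rw [ContinuousLinearMap.eq_adjoint_iff]
      intro x y
      simp only [PsiDef, ContinuousLinearMap.comp_apply,
        LinearIsometry.coe_toContinuousLinearMap,
        LinearIsometryEquiv.coe_toLinearIsometry]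
      obtain ⟨x', rfl⟩ : ∃ x', x = UDef R (G.c α) x' :=
        ⟨(UDef R (G.c α)).symm x, ((UDef R (G.c α)).apply_symm_apply x).symm⟩
      obtain ⟨y', rfl⟩ : ∃ y', y = UDef R (G.d α) y' :=
        ⟨(UDef R (G.d α)).symm y, ((UDef R (G.d α)).apply_symm_apply y).symm⟩
      rw [LinearIsometryEquiv.symm_apply_apply, LinearIsometryEquiv.symm_apply_apply,
        LinearIsometryEquiv.inner_map_map, LinearIsometryEquiv.inner_map_map]
      exact ContinuousLinearMap.adjoint_inner_left (Φ α) y' x'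
    rw [← hadj]
    simp only [PsiDef, ContinuousLinearMap.comp_apply,
      LinearIsometry.coe_toContinuousLinearMap,
      LinearIsometryEquiv.coe_toLinearIsometry]
    rw [castH_iso R (UDef R) (G.d_star α).symm, LinearIsometryEquiv.symm_apply_apply,
      castH_iso R (UDef R) (G.c_star α), hstar α g',
      LinearIsometryEquiv.symm_apply_apply]
  · -- Ψ_shift
    intro α x hx h
    simp only [PsiDef, VDef, ContinuousLinearMap.comp_apply,
      LinearIsometry.coe_toContinuousLinearMap,
      LinearIsometryEquiv.coe_toLinearIsometry, KxCLM_apply]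
    rw [castH_iso R (UDef R) hx.symm, castR_Kx R hx.symm x rfl h,
      LinearIsometryEquiv.symm_apply_apply,
      hshift α x hx h,
      castH_iso R (UDef R) (A.a_act hx), castR_Kx R (A.a_act hx) (A.act α x) rfl]
  · -- Minimal
    intro s
    have hVU : ∀ (x : {x : X // A.a x = s}) (h : E (p x.val)),
        castH 𝕜 (KspDef R) x.2 (VDef R x.val h) = UDef R s ((R s).Kx x h) := by
      intro x h
      simp only [VDef, ContinuousLinearMap.comp_apply,
        LinearIsometry.coe_toContinuousLinearMap,
        LinearIsometryEquiv.coe_toLinearIsometry, KxCLM_apply]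
      rw [castH_iso R (UDef R) x.2, castR_Kx R x.2 x.val rfl h]
    have hset : (⋃ x : {x : X // A.a x = s}, Set.range fun h : E (p x.val) =>
        castH 𝕜 (KspDef R) x.2 (VDef R x.val h)) =
        ⇑(UDef R s) '' (Set.range (fun q : Σ x : {x : X // A.a x = s}, E (p x.val) =>
          (R s).Kx q.1 q.2)) := by
      ext u
      simp only [Set.mem_iUnion, Set.mem_range, Set.mem_image]
      constructor
      · rintro ⟨x, h, rfl⟩
        exact ⟨(R s).Kx x h, ⟨⟨x, h⟩, rfl⟩, (hVU x h).symm⟩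
      · rintro ⟨a, ⟨⟨x, h⟩, rfl⟩, rfl⟩
        exact ⟨x, h, hVU x h⟩
    show Dense (↑(Submodule.span 𝕜 (⋃ x : {x : X // A.a x = s},
      Set.range fun h : E (p x.val) => castH 𝕜 (KspDef R) x.2 (VDef R x.val h))) :
        Set ((KspDef R s).carrier))
    rw [hset]
    exact dense_span_image (UDef R s) (dense_Kx R)

end ConstructSec

/-- for a `Γ`-invariant partially positive semidefinite kernel
`K` the following are equivalent: (1) `K` is of bounded shift type; (2) there
is a unique bounded `*`-representation `Φ` on the bundle of reproducing kernel
Hilbert spaces with `Φ(α) K^{d(α)}_x h = K^{c(α)}_{α·x} h`; (3) there is a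
minimal `Γ`-invariant Hilbert space linearisation of `K`, unique modulo
unitary equivalence. -/
theorem bounded_shift_tfae_invariant_linearisation
    (K : ∀ y x : X, E (p x) →L[𝕜] E (p y))
    (hK : PartPSD A p K) (hKinv : GammaInvariant A p hp K)
    (R : ∀ s : S, RKHSOn.{u, uΓ, uS, v, vO, w, w'} 𝕜 E A p K s) :
    (BoundedShiftType A p hp K ↔
      (∃ Φ : ∀ α : Γ, (R (G.d α)).carrier →L[𝕜] (R (G.c α)).carrier,
        ((∀ (α β : Γ) (hc : G.d α = G.c β) (f : (R (G.d β)).carrier),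
          Φ (G.mul α β) (castR A p R (G.d_mul hc).symm f) =
            castR A p R (G.c_mul hc).symm
              (Φ α (castR A p R hc.symm (Φ β f)))) ∧
        (∀ (α : Γ) (g : (R (G.c α)).carrier),
          castR A p R (G.c_star α)
              (Φ (G.star α) (castR A p R (G.d_star α).symm g)) =
            ContinuousLinearMap.adjoint (Φ α) g) ∧
        (∀ (α : Γ) (x : X) (hx : G.d α = A.a x) (h : E (p x)),
          Φ α ((R (G.d α)).Kx ⟨x, hx.symm⟩ h) =
            (R (G.c α)).Kx ⟨A.act α x, A.a_act hx⟩
              ((castE 𝕜 E (hp hx)).symm h))) ∧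
        ∀ Φ' : ∀ α : Γ, (R (G.d α)).carrier →L[𝕜] (R (G.c α)).carrier,
          ((∀ (α β : Γ) (hc : G.d α = G.c β) (f : (R (G.d β)).carrier),
            Φ' (G.mul α β) (castR A p R (G.d_mul hc).symm f) =
              castR A p R (G.c_mul hc).symm
                (Φ' α (castR A p R hc.symm (Φ' β f)))) ∧
          (∀ (α : Γ) (g : (R (G.c α)).carrier),
            castR A p R (G.c_star α)
                (Φ' (G.star α) (castR A p R (G.d_star α).symm g)) =
              ContinuousLinearMap.adjoint (Φ' α) g) ∧
          (∀ (α : Γ) (x : X) (hx : G.d α = A.a x) (h : E (p x)),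
            Φ' α ((R (G.d α)).Kx ⟨x, hx.symm⟩ h) =
              (R (G.c α)).Kx ⟨A.act α x, A.a_act hx⟩
                ((castE 𝕜 E (hp hx)).symm h))) → Φ' = Φ)) ∧
    (BoundedShiftType A p hp K ↔
      ∃ L : InvLin.{u, uΓ, uS, v, vO, w, max v w} 𝕜 E A p hp K,
        InvLin.Minimal L ∧
        ∀ L' : InvLin.{u, uΓ, uS, v, vO, w, max v w} 𝕜 E A p hp K,
          InvLin.Minimal L' →
          ∃ U : ∀ s : S, (L.Ksp s).carrier ≃ₗᵢ[𝕜] (L'.Ksp s).carrier,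
            (∀ (α : Γ) (f : (L.Ksp (G.d α)).carrier),
              U (G.c α) (L.Ψ α f) = L'.Ψ α (U (G.d α) f)) ∧
            (∀ (x : X) (h : E (p x)), U (A.a x) (L.V x h) = L'.V x h)) := by
  constructor
  · constructor
    · intro hBST
      obtain ⟨Φ, hmul, hstar, hshift⟩ := exists_Phi_full hp R hK hKinv hBST
      refine ⟨Φ, ⟨hmul, hstar, hshift⟩, ?_⟩
      rintro Φ' ⟨_, _, hshift'⟩
      funext α
      apply denseSpan_ext (dense_Kx R)
      rintro ⟨⟨x, hx⟩, h⟩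
      exact (hshift' α x hx.symm h).trans (hshift α x hx.symm h).symm
    · rintro ⟨Φ, ⟨_, _, hshift⟩, _⟩
      exact bst_of_Phi hp R Φ hshift
  · constructor
    · intro hBST
      obtain ⟨L, hLmin⟩ := exists_minimal_invLin hp R hK hKinv hBST
      exact ⟨L, hLmin, fun L' hL' => invLin_unique hp L L' hLmin hL'⟩
    · rintro ⟨L, _, _⟩
      exact bst_of_InvLin hp L
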